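/- Let A be a Perron-like real m×m matrix with principal eigenvalue s, let Π₁ be the spectral projection onto GE_s(A), and let V be a nonsingular real m×m matrix. Set Y = Π₁V (applying Π₁ to each column of V), X(t) = e^{tA}V and Q_Y(t) = e^{t(A−sI)}Y. Then there exist constants B₀ > 0 and δ > 0 such that for all t ≥ 1, ‖ X(t)/‖X(t)‖ − Q_Y(t)/‖Q_Y(t)‖ ‖ ≤ B₀·e^{−δt} (in particular Q_Y(t) ≠ 0 and X(t) ≠ 0 for all such t). -/

import Mathlib

open Matrix

/-- Matrix exponential of a real square matrix. -/
noncomputable def mexp {m : ℕ} (M : Matrix (Fin m) (Fin m) ℝ) : Matrix (Fin m) (Fin m) ℝ :=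
  NormedSpace.exp M

/-- Frobenius norm of a real square matrix. -/
noncomputable def fnorm {m : ℕ} (M : Matrix (Fin m) (Fin m) ℝ) : ℝ :=
  Real.sqrt (∑ i, ∑ j, (M i j) ^ 2)

/-- Euclidean norm of a vector in ℝ^m. -/
noncomputable def vnorm {m : ℕ} (x : Fin m → ℝ) : ℝ :=
  Real.sqrt (∑ i, (x i) ^ 2)

/-- Frobenius inner product ⟨M, N⟩ = trace(Mᵀ N). -/
def finner {m : ℕ} (M N : Matrix (Fin m) (Fin m) ℝ) : ℝ :=
  ∑ i, ∑ j, M i j * N i j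

/-- The generalized eigenspace GE_s(A) = {x : (A - s•I)^k x = 0 for some k ≥ 1},
as a submodule of ℝ^m. -/
def GEsub {m : ℕ} (A : Matrix (Fin m) (Fin m) ℝ) (s : ℝ) : Submodule ℝ (Fin m → ℝ) where
  carrier := {x | ∃ k : ℕ, 1 ≤ k ∧ ((A - s • 1) ^ k).mulVec x = 0}
  zero_mem' := ⟨1, le_refl 1, Matrix.mulVec_zero _⟩
  add_mem' := by
    rintro a b ⟨k, hk, ha⟩ ⟨l, hl, hb⟩
    refine ⟨max k l, le_trans hk (le_max_left _ _), ?_⟩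
    have h1 : ((A - s • 1) ^ (max k l)).mulVec a = 0 := by
      have h : (A - s • 1) ^ (max k l) = (A - s • 1) ^ (max k l - k) * (A - s • 1) ^ k := by
        rw [← pow_add]; congr 1; omega
      rw [h, ← Matrix.mulVec_mulVec, ha, Matrix.mulVec_zero]
    have h2 : ((A - s • 1) ^ (max k l)).mulVec b = 0 := by
      have h : (A - s • 1) ^ (max k l) = (A - s • 1) ^ (max k l - l) * (A - s • 1) ^ l := by
        rw [← pow_add]; congr 1; omega
      rw [h, ← Matrix.mulVec_mulVec, hb, Matrix.mulVec_zero]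
    rw [Matrix.mulVec_add, h1, h2, add_zero]
  smul_mem' := by
    rintro c a ⟨k, hk, ha⟩
    exact ⟨k, hk, by rw [Matrix.mulVec_smul, ha, smul_zero]⟩

/-! ### Auxiliary material for the proof -/

open NormedSpace Nat Filter

section Aux

lemma stmt6_pow_proj {R : Type*} [Ring R] (F Q : R) (hc : Commute Q F) (hq : Q * Q = Q) :
    ∀ n : ℕ, 1 ≤ n → (F * Q) ^ n = F ^ n * Q := by
  intro n hn
  induction n with
  | zero => omega
  | succ k ih =>
    rcases Nat.eq_or_lt_of_le hn with h1 | h1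
    · simp [← h1]
    · have hk : 1 ≤ k := by omega
      rw [pow_succ, ih hk, pow_succ, mul_assoc, mul_assoc]
      congr 1
      rw [← mul_assoc, hc.eq, mul_assoc, hq]

lemma stmt6_norm_ratio {E : Type*} [NormedAddCommGroup E] [NormedSpace ℝ E] (x y : E)
    (hx : x ≠ 0) (hy : y ≠ 0) :
    ‖‖x‖⁻¹ • x - ‖y‖⁻¹ • y‖ ≤ 2 * ‖x - y‖ / ‖y‖ := by
  set a := ‖x‖ with ha
  set b := ‖y‖ with hb
  have ha0 : 0 < a := norm_pos_iff.mpr hx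
  have hb0 : 0 < b := norm_pos_iff.mpr hy
  have key : a⁻¹ • x - b⁻¹ • y = b⁻¹ • (x - y) + (a⁻¹ - b⁻¹) • x := by
    rw [smul_sub, sub_smul]
    abel
  rw [key]
  have h1 : ‖b⁻¹ • (x - y)‖ = b⁻¹ * ‖x - y‖ := by
    rw [norm_smul, Real.norm_eq_abs, abs_of_pos (by positivity)]
  have h2 : ‖(a⁻¹ - b⁻¹) • x‖ = |b - a| / b := by
    rw [norm_smul, Real.norm_eq_abs, ← ha]
    rw [show a⁻¹ - b⁻¹ = (b - a) / (a * b) by field_simp]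
    rw [abs_div, abs_of_pos (by positivity : (0:ℝ) < a * b)]
    field_simp
  have h3 : |b - a| ≤ ‖x - y‖ := by
    rw [ha, hb]
    calc |‖y‖ - ‖x‖| ≤ ‖y - x‖ := abs_norm_sub_norm_le y x
    _ = ‖x - y‖ := norm_sub_rev y x
  calc ‖b⁻¹ • (x - y) + (a⁻¹ - b⁻¹) • x‖ ≤ ‖b⁻¹ • (x - y)‖ + ‖(a⁻¹ - b⁻¹) • x‖ := norm_add_le _ _
  _ = b⁻¹ * ‖x - y‖ + |b - a| / b := by rw [h1, h2]
  _ ≤ b⁻¹ * ‖x - y‖ + ‖x - y‖ / b := by gcongr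
  _ = 2 * ‖x - y‖ / b := by field_simp; ring

lemma stmt6_normalize_smul {E : Type*} [NormedAddCommGroup E] [NormedSpace ℝ E]
    (c : ℝ) (hc : 0 < c) (X : E) : ‖c • X‖⁻¹ • (c • X) = ‖X‖⁻¹ • X := by
  rw [norm_smul, Real.norm_eq_abs, abs_of_pos hc, mul_inv, smul_smul]
  congr 1
  rw [mul_comm c⁻¹, mul_assoc, inv_mul_cancel₀ hc.ne', mul_one]

lemma stmt6_pow_bound {𝔄 : Type*} [NormedRing 𝔄] [NormedAlgebra ℂ 𝔄] [CompleteSpace 𝔄]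
    [Nontrivial 𝔄] (a : 𝔄) (h : ∀ lam ∈ spectrum ℂ a, ‖lam‖ < 1) :
    ∃ K : ℝ, 0 < K ∧ ∃ r : ℝ, 0 < r ∧ r < 1 ∧ ∀ n : ℕ, ‖a ^ n‖ ≤ K * r ^ n := by
  obtain ⟨lam0, hmem, hmax'⟩ := (spectrum.isCompact a).exists_isMaxOn (spectrum.nonempty a)
    continuous_norm.continuousOn
  have hmax : ∀ k ∈ spectrum ℂ a, ‖k‖ ≤ ‖lam0‖ := fun k hk => hmax' hk
  set ρ : ℝ := ‖lam0‖ with hρ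
  have hρ1 : ρ < 1 := h lam0 hmem
  have hρ0 : 0 ≤ ρ := norm_nonneg _
  set r : ℝ := (ρ + 1) / 2 with hr
  have hr0 : 0 < r := by positivity
  have hr1 : r < 1 := by rw [hr]; linarith
  have hρr : ρ < r := by rw [hr]; linarith
  have hsr : spectralRadius ℂ a < ENNReal.ofReal r := by
    have h1 : spectralRadius ℂ a ≤ (‖lam0‖₊ : ENNReal) := by
      apply iSup₂_le
      intro k hk
      exact_mod_cast hmax k hk
    refine lt_of_le_of_lt h1 ?_
    rw [← ENNReal.ofReal_coe_nnreal, coe_nnnorm]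
    exact ENNReal.ofReal_lt_ofReal_iff_of_nonneg hρ0 |>.mpr hρr
  have hev : ∀ᶠ n : ℕ in atTop, (‖a ^ n‖₊ : ENNReal) ^ (1 / (n:ℝ)) < ENNReal.ofReal r :=
    (spectrum.pow_nnnorm_pow_one_div_tendsto_nhds_spectralRadius a).eventually_lt_const hsr
  obtain ⟨N, hN⟩ := eventually_atTop.mp hev
  have key : ∀ n : ℕ, N ≤ n → 1 ≤ n → ‖a ^ n‖ ≤ r ^ n := by
    intro n hn hn1
    have h2 := hN n hn
    have hne : (n : ℝ) ≠ 0 := by positivity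
    have h3 : ((‖a ^ n‖₊ : ENNReal) ^ (1 / (n:ℝ))) ^ (n : ℝ) ≤ (ENNReal.ofReal r) ^ (n:ℝ) := by
      exact ENNReal.rpow_le_rpow h2.le (by positivity)
    rw [← ENNReal.rpow_mul, one_div, inv_mul_cancel₀ hne, ENNReal.rpow_one,
      ENNReal.rpow_natCast] at h3
    have h4 : (‖a ^ n‖₊ : ENNReal) ≤ ENNReal.ofReal (r ^ n) := by
      rwa [ENNReal.ofReal_pow hr0.le]
    have := ENNReal.toReal_mono (by simp [ENNReal.ofReal_lt_top.ne]) h4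
    simpa [ENNReal.toReal_ofReal (by positivity : (0:ℝ) ≤ r ^ n)] using this
  set K : ℝ := 1 + ∑ n ∈ Finset.range (N + 1), ‖a ^ n‖ / r ^ n with hK
  have hKsum : ∀ n ∈ Finset.range (N+1), 0 ≤ ‖a ^ n‖ / r ^ n := by
    intro n _; positivity
  have hK1 : 1 ≤ K := by
    rw [hK]; nlinarith [Finset.sum_nonneg hKsum]
  refine ⟨K, by linarith, r, hr0, hr1, fun n => ?_⟩
  rcases le_or_gt n N with hcase | hcase
  · have hmem' : n ∈ Finset.range (N+1) := Finset.mem_range.mpr (by omega)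
    have : ‖a ^ n‖ / r ^ n ≤ K := by
      rw [hK]
      have := Finset.single_le_sum hKsum hmem'
      linarith
    calc ‖a ^ n‖ = (‖a ^ n‖ / r ^ n) * r ^ n := by field_simp
    _ ≤ K * r ^ n := by
        apply mul_le_mul_of_nonneg_right this (by positivity)
  · have := key n (by omega) (by omega)
    nlinarith [pow_pos hr0 n]

lemma stmt6_pow_mulVecLin {m : ℕ} (M : Matrix (Fin m) (Fin m) ℝ) (k : ℕ) :
    ∀ x : Fin m → ℝ, (Matrix.mulVecLin M ^ k) x = (M ^ k).mulVec x := by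
  induction k with
  | zero => intro x; simp
  | succ j ih =>
    intro x
    rw [pow_succ, pow_succ, Module.End.mul_apply, Matrix.mulVecLin_apply, ih,
      Matrix.mulVec_mulVec]

lemma stmt6_nilpotent_on_range {m : ℕ} (A : Matrix (Fin m) (Fin m) ℝ) (s : ℝ)
    (P : Matrix (Fin m) (Fin m) ℝ)
    (hPrange : Set.range P.mulVec = (GEsub A s : Set (Fin m → ℝ))) :
    (A - s • 1) ^ m * P = 0 := by
  classical
  have key : ∀ x : Fin m → ℝ, ((A - s • 1) ^ m).mulVec (P.mulVec x) = 0 := by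
    intro x
    have hx : P.mulVec x ∈ (GEsub A s : Set (Fin m → ℝ)) := by
      rw [← hPrange]; exact ⟨x, rfl⟩
    obtain ⟨k, _, hk⟩ := hx
    set f := Matrix.mulVecLin (A - s • 1) with hf
    have hker : P.mulVec x ∈ LinearMap.ker (f ^ k) := by
      rw [LinearMap.mem_ker, stmt6_pow_mulVecLin]; exact hk
    have := Module.End.ker_pow_le_ker_pow_finrank f k hker
    rw [LinearMap.mem_ker, stmt6_pow_mulVecLin] at this
    rwa [Module.finrank_fin_fun] at this
  ext i j
  have := congrFun (key (Pi.single j 1)) i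
  rw [Matrix.mulVec_single] at this
  rw [Matrix.mul_apply]; simpa [Matrix.mulVec, dotProduct] using this

end Aux

section FrobeniusAux

attribute [local instance] Matrix.frobeniusSeminormedAddCommGroup
  Matrix.frobeniusNormedAddCommGroup Matrix.frobeniusNormedRing Matrix.frobeniusNormedAlgebra

variable {m : ℕ}

lemma stmt6_fnorm_eq (M : Matrix (Fin m) (Fin m) ℝ) : fnorm M = ‖M‖ := by
  rw [fnorm, Matrix.frobenius_norm_def, Real.sqrt_eq_rpow]
  norm_num [Real.norm_eq_abs, sq_abs]

lemma stmt6_map_ofReal_mul (M N : Matrix (Fin m) (Fin m) ℝ) :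
    (M * N).map Complex.ofReal = M.map Complex.ofReal * N.map Complex.ofReal := by
  ext i j
  simp [Matrix.mul_apply, Matrix.map_apply]

lemma stmt6_map_ofReal_one :
    (1 : Matrix (Fin m) (Fin m) ℝ).map Complex.ofReal = 1 := by
  ext i j
  simp [Matrix.map_apply, Matrix.one_apply, apply_ite Complex.ofReal]

lemma stmt6_map_ofReal_sub (M N : Matrix (Fin m) (Fin m) ℝ) :
    (M - N).map Complex.ofReal = M.map Complex.ofReal - N.map Complex.ofReal := by
  ext i j
  simp [Matrix.map_apply]

lemma stmt6_map_ofReal_smul_one (s : ℝ) :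
    ((s • 1 : Matrix (Fin m) (Fin m) ℝ)).map Complex.ofReal
      = (s : ℂ) • (1 : Matrix (Fin m) (Fin m) ℂ) := by
  ext i j
  simp [Matrix.map_apply, Matrix.one_apply, apply_ite Complex.ofReal, apply_ite (((s:ℂ)) * ·)]

lemma stmt6_map_ofReal_pow (M : Matrix (Fin m) (Fin m) ℝ) (n : ℕ) :
    (M ^ n).map Complex.ofReal = (M.map Complex.ofReal) ^ n := by
  induction n with
  | zero => simpa using stmt6_map_ofReal_one
  | succ k ih => rw [pow_succ, pow_succ, stmt6_map_ofReal_mul, ih]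

lemma stmt6_map_ofReal_exp (M : Matrix (Fin m) (Fin m) ℝ) :
    (NormedSpace.exp M).map Complex.ofReal = NormedSpace.exp (M.map Complex.ofReal) := by
  have h : Continuous (Complex.ofRealAm.mapMatrix (m := Fin m)) :=
    (Complex.ofRealAm.mapMatrix (m := Fin m)).toLinearMap.continuous_of_finiteDimensional
  exact map_exp (Complex.ofRealAm.mapMatrix (m := Fin m)) h M

lemma stmt6_norm_map_ofReal (M : Matrix (Fin m) (Fin m) ℝ) :
    ‖M.map Complex.ofReal‖ = ‖M‖ := by
  simp [Matrix.frobenius_norm_def]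

lemma stmt6_mulVec_pow_eigen (M : Matrix (Fin m) (Fin m) ℂ) (u : Fin m → ℂ) (μ : ℂ)
    (h : M.mulVec u = μ • u) (n : ℕ) : (M ^ n).mulVec u = μ ^ n • u := by
  induction n with
  | zero => simp
  | succ k ih =>
    rw [pow_succ, ← Matrix.mulVec_mulVec, h, Matrix.mulVec_smul, ih, smul_smul, pow_succ,
      mul_comm]

lemma stmt6_mulVec_exp_eigen (M : Matrix (Fin m) (Fin m) ℂ) (u : Fin m → ℂ) (μ : ℂ)
    (h : M.mulVec u = μ • u) : (NormedSpace.exp M).mulVec u = Complex.exp μ • u := by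
  classical
  let L : Matrix (Fin m) (Fin m) ℂ →ₗ[ℝ] (Fin m → ℂ) :=
    { toFun := fun X => X.mulVec u
      map_add' := fun X Y => Matrix.add_mulVec X Y u
      map_smul' := fun c X => by
        ext i
        simp [Matrix.mulVec, dotProduct, Finset.smul_sum, Finset.mul_sum, Matrix.smul_apply,
          smul_mul_assoc, mul_assoc] }
  have hL : Continuous L := L.continuous_of_finiteDimensional
  let Lc : Matrix (Fin m) (Fin m) ℂ →L[ℝ] (Fin m → ℂ) := ⟨L, hL⟩
  have hsum : Summable fun n : ℕ => ((n ! : ℝ))⁻¹ • M ^ n := expSeries_summable' (𝕂 := ℝ) M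
  have h1 : (NormedSpace.exp M).mulVec u = ∑' n : ℕ, ((n ! : ℝ))⁻¹ • (M ^ n).mulVec u := by
    have := Lc.map_tsum hsum
    rw [exp_eq_tsum ℝ]
    calc Lc (∑' n : ℕ, ((n ! : ℝ))⁻¹ • M ^ n) = ∑' n : ℕ, Lc (((n ! : ℝ))⁻¹ • M ^ n) := this
    _ = ∑' n : ℕ, ((n ! : ℝ))⁻¹ • (M ^ n).mulVec u := by
        refine tsum_congr fun n => ?_
        exact Lc.map_smul _ _
  rw [h1]
  have h2 : ∀ n : ℕ, ((n ! : ℝ))⁻¹ • (M ^ n).mulVec u = (((n ! : ℝ))⁻¹ • μ ^ n) • u := by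
    intro n
    rw [stmt6_mulVec_pow_eigen M u μ h n]
    exact (smul_assoc _ _ _).symm
  simp_rw [h2]
  rw [(expSeries_summable' (𝕂 := ℝ) μ).tsum_smul_const]
  congr 1
  have hexp : NormedSpace.exp μ = ∑' n : ℕ, ((n ! : ℝ))⁻¹ • μ ^ n := by
    rw [exp_eq_tsum ℝ]
  rw [← hexp, Complex.exp_eq_exp_ℂ]

lemma stmt6_exp_mul_proj (N P : Matrix (Fin m) (Fin m) ℝ) (hNP : N ^ m * P = 0) (t : ℝ) :
    NormedSpace.exp (t • N) * P
      = ∑ k ∈ Finset.range m, (t ^ k * ((k)! : ℝ)⁻¹) • (N ^ k * P) := by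
  have hzero : ∀ n : ℕ, m ≤ n → N ^ n * P = 0 := by
    intro n hn
    have : N ^ n = N ^ (n - m) * N ^ m := by rw [← pow_add]; congr 1; omega
    rw [this, mul_assoc, hNP, mul_zero]
  have h1 : NormedSpace.exp (t • N) * P = ∑' n : ℕ, ((n ! : ℝ))⁻¹ • ((t • N) ^ n) * P := by
    rw [exp_eq_tsum ℝ]
    exact ((expSeries_summable' (𝕂 := ℝ) (t • N)).tsum_mul_right P).symm
  have h2 : ∀ n : ℕ, ((n ! : ℝ))⁻¹ • ((t • N) ^ n) * P = (t ^ n * ((n)! : ℝ)⁻¹) • (N ^ n * P) := by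
    intro n
    rw [smul_pow, smul_mul_assoc, smul_mul_assoc, smul_smul, mul_comm ((n ! : ℝ))⁻¹ (t ^ n)]
  rw [h1]
  rw [tsum_eq_sum (s := Finset.range m) ?_]
  · exact Finset.sum_congr rfl fun k _ => h2 k
  · intro n hn
    rw [h2 n, hzero n (by simpa using hn), smul_zero]

lemma stmt6_exp_smul_one (c : ℝ) :
    NormedSpace.exp (c • (1 : Matrix (Fin m) (Fin m) ℝ)) = Real.exp c • 1 := by
  have halg : c • (1 : Matrix (Fin m) (Fin m) ℝ) = algebraMap ℝ _ c := by
    rw [Algebra.algebraMap_eq_smul_one]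
  have hcont : Continuous (algebraMap ℝ (Matrix (Fin m) (Fin m) ℝ)) :=
    (Algebra.linearMap ℝ (Matrix (Fin m) (Fin m) ℝ)).continuous_of_finiteDimensional
  rw [halg]
  have := map_exp (algebraMap ℝ (Matrix (Fin m) (Fin m) ℝ)) hcont c
  rw [← Real.exp_eq_exp_ℝ, Algebra.algebraMap_eq_smul_one] at this
  exact this.symm

lemma stmt6_exp_shift (A : Matrix (Fin m) (Fin m) ℝ) (s t : ℝ) :
    NormedSpace.exp (t • (A - s • 1)) = Real.exp (-(s * t)) • NormedSpace.exp (t • A) := by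
  have hsplit : t • (A - s • 1) = t • A + (-(s * t)) • (1 : Matrix (Fin m) (Fin m) ℝ) := by
    rw [smul_sub, smul_smul]
    rw [show (-(s * t)) • (1 : Matrix (Fin m) (Fin m) ℝ) = -((t * s) • 1) by
      rw [neg_smul]; congr 1; ring_nf]
    abel
  rw [hsplit, Matrix.exp_add_of_commute _ _ (((Commute.one_right (t • A)).smul_right (-(s * t))))]
  rw [stmt6_exp_smul_one, mul_comm]
  rw [Matrix.mul_smul, mul_one]

end FrobeniusAux

section Spec

attribute [local instance] Matrix.frobeniusSeminormedAddCommGroup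
  Matrix.frobeniusNormedAddCommGroup Matrix.frobeniusNormedRing Matrix.frobeniusNormedAlgebra

lemma stmt6_spec_small {m : ℕ} (A : Matrix (Fin m) (Fin m) ℝ) (s : ℝ)
    (hperron : ∀ μ ∈ spectrum ℂ (A.map Complex.ofReal), μ ≠ (s : ℂ) → μ.re < s)
    (P : Matrix (Fin m) (Fin m) ℝ)
    (hPidem : P * P = P) (hPcomm : P * A = A * P)
    (hPfix : ∀ x : Fin m → ℝ, (A - s • 1).mulVec x = 0 → P.mulVec x = x) :
    ∀ lam ∈ spectrum ℂ ((NormedSpace.exp ((A.map Complex.ofReal) - (s:ℂ) • 1))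
      * (1 - P.map Complex.ofReal)), ‖lam‖ < 1 := by
  classical
  intro lam hlam
  set Ac := A.map (Complex.ofReal) with hAc
  set Pc := P.map (Complex.ofReal) with hPc
  set Mc := Ac - (s:ℂ) • 1 with hMc
  set D := NormedSpace.exp Mc * (1 - Pc) with hD
  have hPcidem : Pc * Pc = Pc := by
    rw [hPc, ← stmt6_map_ofReal_mul, hPidem]
  have hPcA : Pc * Ac = Ac * Pc := by
    rw [hPc, hAc, ← stmt6_map_ofReal_mul, ← stmt6_map_ofReal_mul, hPcomm]
  have hPcM : Commute Pc Mc := by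
    show Pc * Mc = Mc * Pc
    rw [hMc, mul_sub, sub_mul, hPcA]
    congr 1
    rw [Matrix.mul_smul, Matrix.smul_mul, mul_one, one_mul]
  have hPcE : Commute Pc (NormedSpace.exp Mc) := hPcM.exp_right
  have hPcD : Pc * D = 0 := by
    rw [hD, ← mul_assoc, hPcE.eq, mul_assoc, mul_sub, mul_one, hPcidem, sub_self, mul_zero]
  -- eigenvector of D
  have heig : Module.End.HasEigenvalue (Matrix.toLinAlgEquiv' D) lam := by
    rw [Module.End.hasEigenvalue_iff_mem_spectrum, AlgEquiv.spectrum_eq Matrix.toLinAlgEquiv' D]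
    exact hlam
  obtain ⟨v, hv⟩ := heig.exists_hasEigenvector
  have hveq : D.mulVec v = lam • v := by
    have := hv.apply_eq_smul
    rwa [Matrix.toLinAlgEquiv'_apply] at this
  by_cases hl0 : lam = 0
  · simp [hl0]
  -- v is killed by Pc
  have hPcv : Pc.mulVec v = 0 := by
    have h0 : Pc.mulVec (D.mulVec v) = 0 := by
      rw [Matrix.mulVec_mulVec, hPcD, Matrix.zero_mulVec]
    rw [hveq, Matrix.mulVec_smul] at h0
    exact (smul_eq_zero.mp h0).resolve_left hl0
  -- the invariant subspace
  set E : Submodule ℂ (Fin m → ℂ) :=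
    LinearMap.ker (Matrix.mulVecLin (D - lam • 1)) ⊓ LinearMap.ker (Matrix.mulVecLin Pc) with hE
  have memE : ∀ x : Fin m → ℂ, x ∈ E ↔ (D.mulVec x = lam • x ∧ Pc.mulVec x = 0) := by
    intro x
    rw [hE, Submodule.mem_inf, LinearMap.mem_ker, LinearMap.mem_ker,
      Matrix.mulVecLin_apply, Matrix.mulVecLin_apply, Matrix.sub_mulVec,
      Matrix.smul_mulVec, Matrix.one_mulVec, sub_eq_zero]
  have hvE : v ∈ E := (memE v).mpr ⟨hveq, hPcv⟩
  have hMcD : Commute Mc D := by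
    refine Commute.mul_right ((Commute.refl Mc).exp_right) ?_
    exact (Commute.one_right Mc).sub_right hPcM.symm
  have hinv : ∀ x ∈ E, (Matrix.mulVecLin Mc) x ∈ E := by
    intro x hx
    obtain ⟨hx1, hx2⟩ := (memE x).mp hx
    rw [Matrix.mulVecLin_apply]
    refine (memE _).mpr ⟨?_, ?_⟩
    · rw [Matrix.mulVec_mulVec, ← hMcD.eq, ← Matrix.mulVec_mulVec, hx1, Matrix.mulVec_smul]
    · rw [Matrix.mulVec_mulVec, hPcM.eq, ← Matrix.mulVec_mulVec, hx2, Matrix.mulVec_zero]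
  set g : Module.End ℂ E := (Matrix.mulVecLin Mc).restrict hinv with hg
  haveI : Nontrivial E := nontrivial_of_ne ⟨v, hvE⟩ 0 (by
    intro h
    exact hv.right (by simpa using congrArg Subtype.val h))
  obtain ⟨μ, hμ⟩ := Module.End.exists_eigenvalue g
  obtain ⟨u', hu'⟩ := hμ.exists_hasEigenvector
  set u : Fin m → ℂ := (u' : Fin m → ℂ) with hu
  have hu0 : u ≠ 0 := by
    intro h
    exact hu'.right (Subtype.ext h)
  have hMu : Mc.mulVec u = μ • u := by
    have h1 := hu'.apply_eq_smul
    have h2 := congrArg Subtype.val h1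
    rw [hg, LinearMap.restrict_coe_apply, Matrix.mulVecLin_apply] at h2
    exact h2
  obtain ⟨hDu, hPcu⟩ := (memE u).mp u'.2
  have hexp : (NormedSpace.exp Mc).mulVec u = Complex.exp μ • u := stmt6_mulVec_exp_eigen _ _ _ hMu
  have hDu' : D.mulVec u = Complex.exp μ • u := by
    rw [hD, ← Matrix.mulVec_mulVec, Matrix.sub_mulVec, Matrix.one_mulVec, hPcu, sub_zero, hexp]
  have lam_eq : lam = Complex.exp μ := by
    have h3 : (lam - Complex.exp μ) • u = 0 := by
      have h4 := hDu.symm.trans hDu'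
      rw [sub_smul, h4, sub_self]
    rcases smul_eq_zero.mp h3 with h | h
    · exact sub_eq_zero.mp h
    · exact absurd h hu0
  have hAcu : Ac.mulVec u = (μ + (s:ℂ)) • u := by
    have : Ac = Mc + (s:ℂ) • 1 := by rw [hMc]; abel
    rw [this, Matrix.add_mulVec, hMu, Matrix.smul_mulVec, Matrix.one_mulVec, add_smul]
  have hμ0 : μ ≠ 0 := by
    intro h0
    rw [h0, zero_add] at hAcu
    -- real and imaginary parts are fixed vectors of A with eigenvalue s
    set x : Fin m → ℝ := fun i => (u i).re with hx
    set y : Fin m → ℝ := fun i => (u i).im with hy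
    have hentry : ∀ i, ∑ j, (A i j : ℂ) * u j = (s : ℂ) * u i := by
      intro i
      have := congrFun hAcu i
      simpa [Matrix.mulVec, dotProduct, hAc, Matrix.map_apply] using this
    have hxA : A.mulVec x = s • x := by
      ext i
      have := congrArg Complex.re (hentry i)
      simpa [Complex.re_sum, Complex.mul_re, Matrix.mulVec, dotProduct, hx,
        Finset.mul_sum] using this
    have hyA : A.mulVec y = s • y := by
      ext i
      have := congrArg Complex.im (hentry i)
      simpa [Complex.im_sum, Complex.mul_im, Matrix.mulVec, dotProduct, hy,
        Finset.mul_sum] using this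
    have hPx : P.mulVec x = x := by
      apply hPfix
      rw [Matrix.sub_mulVec, Matrix.smul_mulVec, Matrix.one_mulVec, hxA, sub_self]
    have hPy : P.mulVec y = y := by
      apply hPfix
      rw [Matrix.sub_mulVec, Matrix.smul_mulVec, Matrix.one_mulVec, hyA, sub_self]
    have : Pc.mulVec u = u := by
      ext i
      have hre := congrFun hPx i
      have him := congrFun hPy i
      simp only [Matrix.mulVec, dotProduct, hx, hy] at hre him
      apply Complex.ext
      · simpa [Matrix.mulVec, dotProduct, hPc, Matrix.map_apply, Complex.re_sum,
          Complex.mul_re] using hre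
      · simpa [Matrix.mulVec, dotProduct, hPc, Matrix.map_apply, Complex.im_sum,
          Complex.mul_im] using him
    rw [hPcu] at this
    exact hu0 this.symm
  have hmem : (μ + (s:ℂ)) ∈ spectrum ℂ Ac := by
    rw [← AlgEquiv.spectrum_eq Matrix.toLinAlgEquiv' Ac,
      ← Module.End.hasEigenvalue_iff_mem_spectrum]
    apply Module.End.hasEigenvalue_of_hasEigenvector (x := u)
    refine ⟨Module.End.mem_eigenspace_iff.mpr ?_, hu0⟩
    rw [Matrix.toLinAlgEquiv'_apply]
    exact hAcu
  have hne : μ + (s:ℂ) ≠ (s:ℂ) := by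
    intro h
    exact hμ0 (by linear_combination h)
  have hlt := hperron _ hmem hne
  rw [Complex.add_re, Complex.ofReal_re] at hlt
  rw [lam_eq, Complex.norm_exp]
  exact Real.exp_lt_one_iff.mpr (by linarith)

lemma stmt6_decay {m : ℕ} (hm : 0 < m) (A : Matrix (Fin m) (Fin m) ℝ) (s : ℝ)
    (hperron : ∀ μ ∈ spectrum ℂ (A.map Complex.ofReal), μ ≠ (s : ℂ) → μ.re < s)
    (P : Matrix (Fin m) (Fin m) ℝ)
    (hPidem : P * P = P) (hPcomm : P * A = A * P)
    (hPfix : ∀ x : Fin m → ℝ, (A - s • 1).mulVec x = 0 → P.mulVec x = x) :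
    ∃ C : ℝ, 0 < C ∧ ∃ ε : ℝ, 0 < ε ∧ ∀ t : ℝ, 1 ≤ t →
      ‖NormedSpace.exp (t • (A - s • 1)) * (1 - P)‖ ≤ C * Real.exp (-ε * t) := by
  classical
  haveI : Nontrivial (Matrix (Fin m) (Fin m) ℂ) :=
    ⟨1, 0, fun h => by simpa using congrFun (congrFun h ⟨0, hm⟩) ⟨0, hm⟩⟩
  set M : Matrix (Fin m) (Fin m) ℝ := A - s • 1 with hM
  set C₀ : Matrix (Fin m) (Fin m) ℝ := NormedSpace.exp M * (1 - P) with hC₀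
  -- complexification of C₀ is D from stmt6_spec_small
  have hmapM : M.map Complex.ofReal = A.map Complex.ofReal - (s : ℂ) • 1 := by
    rw [hM, stmt6_map_ofReal_sub, stmt6_map_ofReal_smul_one]
  have hmapC₀ : C₀.map Complex.ofReal
      = NormedSpace.exp (A.map Complex.ofReal - (s:ℂ) • 1) * (1 - P.map Complex.ofReal) := by
    rw [hC₀, stmt6_map_ofReal_mul, stmt6_map_ofReal_exp, hmapM, stmt6_map_ofReal_sub,
      stmt6_map_ofReal_one]
  have hspec := stmt6_spec_small A s hperron P hPidem hPcomm hPfix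
  rw [← hmapC₀] at hspec
  obtain ⟨K, hK0, r, hr0, hr1, hKr⟩ := stmt6_pow_bound (C₀.map Complex.ofReal) hspec
  -- transfer power bound to the real matrix
  have hpow : ∀ n : ℕ, ‖C₀ ^ n‖ ≤ K * r ^ n := by
    intro n
    have := hKr n
    rwa [← stmt6_map_ofReal_pow, stmt6_norm_map_ofReal] at this
  -- bound for exp on [0,1]
  obtain ⟨r₀, hr₀mem, hr₀max⟩ := (isCompact_Icc (a := (0:ℝ)) (b := 1)).exists_isMaxOn
    ⟨0, by norm_num⟩ ((continuous_norm.comp (exp_continuous.comp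
      (continuous_id.smul continuous_const))).continuousOn
      (f := fun u : ℝ => ‖NormedSpace.exp (u • M)‖))
  set K₁ : ℝ := ‖NormedSpace.exp (r₀ • M)‖ with hK₁
  have hK₁0 : 0 ≤ K₁ := norm_nonneg _
  have hK₁b : ∀ u : ℝ, u ∈ Set.Icc (0:ℝ) 1 → ‖NormedSpace.exp (u • M)‖ ≤ K₁ :=
    fun u hu => hr₀max hu
  set ε : ℝ := -Real.log r with hε
  have hε0 : 0 < ε := by
    rw [hε]
    have := Real.log_neg hr0 hr1
    linarith
  refine ⟨K₁ * K * Real.exp ε + 1, by positivity, ε, hε0, fun t ht => ?_⟩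
  set n : ℕ := ⌊t⌋₊ with hn
  have ht0 : (0:ℝ) ≤ t := by linarith
  have hn1 : 1 ≤ n := Nat.one_le_iff_ne_zero.mpr (by
    intro h0
    have := Nat.floor_eq_zero.mp h0
    linarith)
  have hnle : (n : ℝ) ≤ t := Nat.floor_le ht0
  have hnlt : t < (n : ℝ) + 1 := Nat.lt_floor_add_one t
  -- split the exponential
  have hsplit : NormedSpace.exp (t • M) * (1 - P)
      = NormedSpace.exp ((t - n) • M) * C₀ ^ n := by
    have h1 : t • M = (t - n) • M + (n : ℝ) • M := by rw [← add_smul]; ring_nf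
    have h2 : NormedSpace.exp (t • M)
        = NormedSpace.exp ((t - n) • M) * NormedSpace.exp ((n:ℝ) • M) := by
      rw [h1]
      exact exp_add_of_commute (((Commute.refl M).smul_left (t - n)).smul_right (n:ℝ))
    have h3 : NormedSpace.exp ((n:ℝ) • M) = (NormedSpace.exp M) ^ n := by
      rw [show ((n:ℝ) • M) = (n : ℕ) • M from (Nat.cast_smul_eq_nsmul ℝ n M), Matrix.exp_nsmul]
    have hcQ : Commute (1 - P : Matrix (Fin m) (Fin m) ℝ) (NormedSpace.exp M) := by
      apply Commute.exp_right
      refine Commute.sub_left (Commute.one_left M) ?_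
      show P * M = M * P
      rw [hM, mul_sub, sub_mul, hPcomm, Matrix.mul_smul, Matrix.smul_mul, mul_one, one_mul]
    have h4 : (NormedSpace.exp M) ^ n * (1 - P) = C₀ ^ n := by
      rw [hC₀, stmt6_pow_proj _ _ hcQ (by
        rw [show ((1:Matrix (Fin m) (Fin m) ℝ) - P) * (1 - P) = 1 - P - P + P * P from by
          noncomm_ring, hPidem]
        abel) n hn1]
    rw [h2, h3, mul_assoc, h4]
  rw [hsplit]
  have hb1 : ‖NormedSpace.exp ((t - n) • M)‖ ≤ K₁ := by
    apply hK₁b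
    constructor
    · linarith
    · linarith
  have hb2 : ‖C₀ ^ n‖ ≤ K * r ^ n := hpow n
  have hrn : r ^ n ≤ Real.exp ε * Real.exp (-ε * t) := by
    have h5 : (r : ℝ) ^ (n:ℝ) ≤ (r : ℝ) ^ (t - 1) :=
      Real.rpow_le_rpow_of_exponent_ge hr0 hr1.le (by linarith)
    rw [Real.rpow_natCast] at h5
    have h6 : (r : ℝ) ^ (t - 1) = Real.exp (Real.log r * (t - 1)) := by
      rw [Real.rpow_def_of_pos hr0]
    have h7 : Real.log r * (t - 1) = ε + (-ε * t) := by rw [hε]; ring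
    rw [h6, h7, Real.exp_add] at h5
    exact h5
  calc ‖NormedSpace.exp ((t - n) • M) * C₀ ^ n‖
      ≤ ‖NormedSpace.exp ((t - n) • M)‖ * ‖C₀ ^ n‖ := norm_mul_le _ _
  _ ≤ K₁ * (K * r ^ n) := by
      apply mul_le_mul hb1 hb2 (norm_nonneg _) hK₁0
  _ ≤ K₁ * (K * (Real.exp ε * Real.exp (-ε * t))) := by
      have : K * r ^ n ≤ K * (Real.exp ε * Real.exp (-ε * t)) :=
        mul_le_mul_of_nonneg_left hrn hK0.le
      exact mul_le_mul_of_nonneg_left this hK₁0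
  _ ≤ (K₁ * K * Real.exp ε + 1) * Real.exp (-ε * t) := by
      have hexp0 : 0 < Real.exp (-ε * t) := Real.exp_pos _
      nlinarith

end Spec

section Main

attribute [local instance] Matrix.frobeniusSeminormedAddCommGroup
  Matrix.frobeniusNormedAddCommGroup Matrix.frobeniusNormedRing Matrix.frobeniusNormedAlgebra

lemma stmt6_mexp_eq {m : ℕ} (M : Matrix (Fin m) (Fin m) ℝ) :
    mexp M = NormedSpace.exp M := rfl

/-- For a Perron-like matrix A with principal eigenvalue s, spectral projection
P onto GE_s(A) and nonsingular V, with X(t) = e^{tA}V and Q_Y(t) = e^{t(A−sI)}(PV), there are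
B₀, δ > 0 with ‖X(t)/‖X(t)‖ − Q_Y(t)/‖Q_Y(t)‖‖ ≤ B₀ e^{−δt} for t ≥ 1 (and both nonzero). -/
theorem stmt6 {m : ℕ} (A : Matrix (Fin m) (Fin m) ℝ) (s : ℝ)
    (hs : s ∈ spectrum ℝ A)
    (hperron : ∀ μ ∈ spectrum ℂ (A.map Complex.ofReal), μ ≠ (s : ℂ) → μ.re < s)
    (P : Matrix (Fin m) (Fin m) ℝ)
    (hPidem : P * P = P) (hPcomm : P * A = A * P)
    (hPrange : Set.range P.mulVec = (GEsub A s : Set (Fin m → ℝ)))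
    (V : Matrix (Fin m) (Fin m) ℝ) (hV : IsUnit V) :
    ∃ B₀ : ℝ, 0 < B₀ ∧ ∃ δ : ℝ, 0 < δ ∧ ∀ t : ℝ, 1 ≤ t →
      mexp (t • (A - s • 1)) * (P * V) ≠ 0 ∧
      mexp (t • A) * V ≠ 0 ∧
      fnorm ((fnorm (mexp (t • A) * V))⁻¹ • (mexp (t • A) * V) -
          (fnorm (mexp (t • (A - s • 1)) * (P * V)))⁻¹ • (mexp (t • (A - s • 1)) * (P * V)))
        ≤ B₀ * Real.exp (-δ * t) := by
  classical
  -- an eigenvector of A for the eigenvalue s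
  have heig : Module.End.HasEigenvalue (Matrix.toLinAlgEquiv' A) s := by
    rw [Module.End.hasEigenvalue_iff_mem_spectrum, AlgEquiv.spectrum_eq Matrix.toLinAlgEquiv' A]
    exact hs
  obtain ⟨v, hv⟩ := heig.exists_hasEigenvector
  have hveq : A.mulVec v = s • v := by
    have := hv.apply_eq_smul
    rwa [Matrix.toLinAlgEquiv'_apply] at this
  have hm : 0 < m := by
    rcases Nat.eq_zero_or_pos m with h0 | h
    · subst h0
      exact absurd (Subsingleton.elim v 0) hv.right
    · exact h
  haveI : Nontrivial (Matrix (Fin m) (Fin m) ℝ) :=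
    ⟨1, 0, fun h => by simpa using congrFun (congrFun h ⟨0, hm⟩) ⟨0, hm⟩⟩
  set M : Matrix (Fin m) (Fin m) ℝ := A - s • 1 with hM
  have hPfix : ∀ x : Fin m → ℝ, M.mulVec x = 0 → P.mulVec x = x := by
    intro x hx
    have hmem : x ∈ (GEsub A s : Set (Fin m → ℝ)) := ⟨1, le_refl 1, by
      rw [pow_one]
      exact hx⟩
    rw [← hPrange] at hmem
    obtain ⟨u, hu⟩ := hmem
    rw [← hu, Matrix.mulVec_mulVec, hPidem]
  have hMv : M.mulVec v = 0 := by
    rw [hM, Matrix.sub_mulVec, Matrix.smul_mulVec, Matrix.one_mulVec, hveq, sub_self]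
  have hPv : P.mulVec v = v := hPfix v hMv
  have hP0 : P ≠ 0 := fun h => hv.right (by rw [← hPv, h, Matrix.zero_mulVec])
  obtain ⟨U, rfl⟩ := hV
  have hU0 : (U : Matrix (Fin m) (Fin m) ℝ) ≠ 0 := U.isUnit.ne_zero
  have hPV : P * (U : Matrix (Fin m) (Fin m) ℝ) ≠ 0 := by
    intro h
    apply hP0
    have h3 : P * ((U : Matrix (Fin m) (Fin m) ℝ) * (↑(U⁻¹) : Matrix (Fin m) (Fin m) ℝ)) = 0 := by
      rw [← mul_assoc, h, zero_mul]
    rwa [Units.mul_inv, mul_one] at h3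
  have hPVn : 0 < ‖P * (U : Matrix (Fin m) (Fin m) ℝ)‖ := norm_pos_iff.mpr hPV
  have hUn : 0 < ‖(U : Matrix (Fin m) (Fin m) ℝ)‖ := norm_pos_iff.mpr hU0
  -- the decay estimate and the nilpotency
  obtain ⟨C, hC0, ε, hε0, hdecay⟩ := stmt6_decay hm A s hperron P hPidem hPcomm hPfix
  have hNil : M ^ m * P = 0 := stmt6_nilpotent_on_range A s P hPrange
  have hPM : P * M = M * P := by
    rw [hM, mul_sub, sub_mul, hPcomm, Matrix.mul_smul, Matrix.smul_mul, one_mul, mul_one]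
  -- the constant c₃
  set c₃ : ℝ := ∑ k ∈ Finset.range m, (2/ε)^k * ‖M ^ k * P‖ with hc₃
  have hc₃pos : 0 < c₃ := by
    have hterm : ∀ k ∈ Finset.range m, 0 ≤ (2/ε)^k * ‖M ^ k * P‖ := fun k _ => by positivity
    have h0mem : (0:ℕ) ∈ Finset.range m := Finset.mem_range.mpr hm
    have h1 : (2/ε)^(0:ℕ) * ‖M ^ (0:ℕ) * P‖ ≤ c₃ := Finset.single_le_sum hterm h0mem
    rw [pow_zero, pow_zero, one_mul, one_mul] at h1
    have hP' : 0 < ‖P‖ := norm_pos_iff.mpr hP0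
    linarith
  -- lower bound for the norm of e^{tM}(PU)
  have key_low : ∀ t : ℝ, 1 ≤ t →
      ‖P * (U : Matrix (Fin m) (Fin m) ℝ)‖ ≤ (c₃ * Real.exp (ε/2 * t)) *
        ‖NormedSpace.exp (t • M) * (P * (U : Matrix (Fin m) (Fin m) ℝ))‖ := by
    intro t ht
    have ht0 : (0:ℝ) ≤ t := by linarith
    set Ep := NormedSpace.exp (t • M) with hEp
    set En := NormedSpace.exp ((-t) • M) with hEn
    have hcomm : Commute P M := hPM
    have hcPE : P * Ep = Ep * P := ((hcomm.smul_right t).exp_right).eq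
    have hinv : En * Ep = 1 := by
      rw [hEn, hEp,
        ← Matrix.exp_add_of_commute _ _ (((Commute.refl M).smul_left (-t)).smul_right t),
        ← add_smul, show -t + t = 0 by ring, zero_smul, NormedSpace.exp_zero]
    have hfact : (En * P) * (Ep * (P * (U : Matrix (Fin m) (Fin m) ℝ)))
        = P * (U : Matrix (Fin m) (Fin m) ℝ) := by
      rw [show (En * P) * (Ep * (P * (U : Matrix (Fin m) (Fin m) ℝ)))
          = En * ((P * Ep) * (P * (U : Matrix (Fin m) (Fin m) ℝ))) from by noncomm_ring]
      rw [hcPE]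
      rw [show En * ((Ep * P) * (P * (U : Matrix (Fin m) (Fin m) ℝ)))
          = (En * Ep) * ((P * P) * (U : Matrix (Fin m) (Fin m) ℝ)) from by noncomm_ring]
      rw [hinv, hPidem, one_mul]
    have hEP : ‖En * P‖ ≤ c₃ * Real.exp (ε/2 * t) := by
      rw [hEn, stmt6_exp_mul_proj M P hNil (-t)]
      have hbound : ∀ k ∈ Finset.range m, ‖((-t)^k * ((k)! : ℝ)⁻¹) • (M^k * P)‖
          ≤ ((2/ε)^k * ‖M^k * P‖) * Real.exp (ε/2 * t) := by
        intro k _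
        rw [norm_smul, Real.norm_eq_abs, abs_mul, abs_pow, abs_neg, abs_of_nonneg ht0,
          abs_of_nonneg (by positivity : (0:ℝ) ≤ ((k)! : ℝ)⁻¹)]
        have hxk : (ε/2*t)^k / ((k)! : ℝ) ≤ Real.exp (ε/2*t) := by
          have h1 : (ε/2*t)^k / ((k)! : ℝ)
              ≤ ∑ i ∈ Finset.range (k+1), (ε/2*t)^i / ((i)! : ℝ) :=
            Finset.single_le_sum (f := fun i => (ε/2*t)^i / ((i)! : ℝ))
              (fun i _ => by positivity) (Finset.self_mem_range_succ k)
          exact h1.trans (Real.sum_le_exp_of_nonneg (by positivity) (k+1))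
        have hcoef : t^k * ((k)! : ℝ)⁻¹ ≤ (2/ε)^k * Real.exp (ε/2*t) := by
          have heq : t^k * ((k)! : ℝ)⁻¹ = ((ε/2*t)^k / ((k)! : ℝ)) * (2/ε)^k := by
            rw [mul_pow, div_pow, div_pow]
            have hk0 : (0:ℝ) < ((k)! : ℝ) := by positivity
            field_simp
          rw [heq]
          calc ((ε/2*t)^k / ((k)! : ℝ)) * (2/ε)^k
              ≤ Real.exp (ε/2*t) * (2/ε)^k :=
                mul_le_mul_of_nonneg_right hxk (by positivity)
          _ = (2/ε)^k * Real.exp (ε/2*t) := mul_comm _ _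
        calc t^k * ((k)! : ℝ)⁻¹ * ‖M^k * P‖
            ≤ ((2/ε)^k * Real.exp (ε/2*t)) * ‖M^k * P‖ :=
              mul_le_mul_of_nonneg_right hcoef (norm_nonneg _)
        _ = ((2/ε)^k * ‖M^k * P‖) * Real.exp (ε/2 * t) := by ring
      calc ‖∑ k ∈ Finset.range m, ((-t)^k * ((k)! : ℝ)⁻¹) • (M^k * P)‖
          ≤ ∑ k ∈ Finset.range m, ‖((-t)^k * ((k)! : ℝ)⁻¹) • (M^k * P)‖ := norm_sum_le _ _
      _ ≤ ∑ k ∈ Finset.range m, ((2/ε)^k * ‖M^k * P‖) * Real.exp (ε/2 * t) :=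
          Finset.sum_le_sum hbound
      _ = c₃ * Real.exp (ε/2 * t) := by rw [hc₃, ← Finset.sum_mul]
    calc ‖P * (U : Matrix (Fin m) (Fin m) ℝ)‖
        = ‖(En * P) * (Ep * (P * (U : Matrix (Fin m) (Fin m) ℝ)))‖ := by rw [hfact]
    _ ≤ ‖En * P‖ * ‖Ep * (P * (U : Matrix (Fin m) (Fin m) ℝ))‖ := norm_mul_le _ _
    _ ≤ (c₃ * Real.exp (ε/2 * t)) * ‖Ep * (P * (U : Matrix (Fin m) (Fin m) ℝ))‖ :=
        mul_le_mul_of_nonneg_right hEP (norm_nonneg _)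
  -- the constants
  refine ⟨2 * C * ‖(U : Matrix (Fin m) (Fin m) ℝ)‖ * c₃ / ‖P * (U : Matrix (Fin m) (Fin m) ℝ)‖,
    div_pos (mul_pos (mul_pos (mul_pos two_pos hC0) hUn) hc₃pos) hPVn,
    ε/2, half_pos hε0, fun t ht => ?_⟩
  have ht0 : (0:ℝ) ≤ t := by linarith
  set Q : Matrix (Fin m) (Fin m) ℝ := mexp (t • M) * (P * (U : Matrix (Fin m) (Fin m) ℝ)) with hQ
  set X : Matrix (Fin m) (Fin m) ℝ := mexp (t • A) * (U : Matrix (Fin m) (Fin m) ℝ) with hX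
  have hQexp : Q = NormedSpace.exp (t • M) * (P * (U : Matrix (Fin m) (Fin m) ℝ)) := rfl
  have hlow := key_low t ht
  rw [← hQexp] at hlow
  have hQ0 : Q ≠ 0 := by
    intro h
    rw [h, norm_zero, mul_zero] at hlow
    linarith
  have hQn : 0 < ‖Q‖ := norm_pos_iff.mpr hQ0
  have hXunit : IsUnit X := (NormedSpace.isUnit_exp (t • A)).mul U.isUnit
  have hX0 : X ≠ 0 := hXunit.ne_zero
  refine ⟨hQ0, hX0, ?_⟩
  set Z : Matrix (Fin m) (Fin m) ℝ := NormedSpace.exp (t • M) * (U : Matrix (Fin m) (Fin m) ℝ)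
    with hZ
  have hZX : Z = Real.exp (-(s*t)) • X := by
    rw [hZ, hX, stmt6_mexp_eq, hM, stmt6_exp_shift A s t, Matrix.smul_mul]
  have hZ0 : Z ≠ 0 := by
    rw [hZX]
    exact smul_ne_zero (Real.exp_ne_zero _) hX0
  rw [stmt6_fnorm_eq, stmt6_fnorm_eq, stmt6_fnorm_eq]
  have hnorm : ‖X‖⁻¹ • X = ‖Z‖⁻¹ • Z := by
    rw [hZX]
    exact (stmt6_normalize_smul _ (Real.exp_pos _) X).symm
  rw [hnorm]
  refine le_trans (stmt6_norm_ratio Z Q hZ0 hQ0) ?_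
  have hZQ : Z - Q = (NormedSpace.exp (t • M) * (1 - P)) * (U : Matrix (Fin m) (Fin m) ℝ) := by
    rw [hZ, hQexp, mul_assoc, ← mul_sub]
    congr 1
    rw [sub_mul, one_mul]
  have hRb : ‖Z - Q‖ ≤ C * Real.exp (-ε * t) * ‖(U : Matrix (Fin m) (Fin m) ℝ)‖ := by
    rw [hZQ]
    calc ‖(NormedSpace.exp (t • M) * (1 - P)) * (U : Matrix (Fin m) (Fin m) ℝ)‖
        ≤ ‖NormedSpace.exp (t • M) * (1 - P)‖ * ‖(U : Matrix (Fin m) (Fin m) ℝ)‖ :=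
          norm_mul_le _ _
    _ ≤ C * Real.exp (-ε * t) * ‖(U : Matrix (Fin m) (Fin m) ℝ)‖ :=
        mul_le_mul_of_nonneg_right (hdecay t ht) (norm_nonneg _)
  set e1 := Real.exp (-(ε/2) * t) with he1
  set e2 := Real.exp (ε/2 * t) with he2
  have h12 : e1 * e2 = 1 := by
    rw [he1, he2, ← Real.exp_add, show -(ε/2)*t + ε/2*t = 0 by ring, Real.exp_zero]
  have hee : Real.exp (-ε * t) = e1 * e1 := by
    rw [he1, ← Real.exp_add]
    congr 1
    ring
  rw [hee] at hRb
  rw [div_le_iff₀ hQn, div_mul_eq_mul_div, div_mul_eq_mul_div, le_div_iff₀ hPVn]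
  have hmul : ‖Z - Q‖ * ‖P * (U : Matrix (Fin m) (Fin m) ℝ)‖
      ≤ (C * (e1*e1) * ‖(U : Matrix (Fin m) (Fin m) ℝ)‖) * ((c₃ * e2) * ‖Q‖) :=
    mul_le_mul hRb hlow (norm_nonneg _)
      (mul_nonneg (mul_nonneg hC0.le (by positivity)) (norm_nonneg _))
  have hrearr : (C * (e1*e1) * ‖(U : Matrix (Fin m) (Fin m) ℝ)‖) * ((c₃ * e2) * ‖Q‖)
      = C * ‖(U : Matrix (Fin m) (Fin m) ℝ)‖ * c₃ * e1 * ‖Q‖ * (e1 * e2) := by ring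
  rw [hrearr, h12, mul_one] at hmul
  nlinarith [hmul]

end Main
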